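/- (Set-level content of Lemma 5.4.) Let F, G : Type ⥤ Type be functors and θ : F ⟶ G a cartesian natural transformation, i.e. one for which every naturality square is a pullback square of types. If the component θ at PUnit, θ_PUnit : F PUnit → G PUnit, has finite fibres (the preimage of every point is finite), then for every type A the component θ_A : F A → G A has finite fibres. -/

import Mathlib

open CategoryTheory

universe u

/-- If `θ : F ⟶ G` is a cartesian natural transformation between endofunctors of
types (every naturality square is a pullback square of types) and the component
`θ_PUnit` has finite fibres, then every component `θ_A` has finite fibres. -/
theorem finite_fibres_of_cartesian {F G : Type u ⥤ Type u} (θ : F ⟶ G)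
    (hcart : ∀ {A B : Type u} (h : A → B),
      Function.Bijective fun x : F.obj A =>
        (⟨(θ.app A x, F.map (TypeCat.ofHom h) x), (NatTrans.naturality_apply θ (TypeCat.ofHom h) x).symm⟩ :
          {q : G.obj A × F.obj B // G.map (TypeCat.ofHom h) q.1 = θ.app B q.2}))
    (hfin : ∀ y : G.obj PUnit, Finite {x : F.obj PUnit // θ.app PUnit x = y}) :
    ∀ (A : Type u) (y : G.obj A), Finite {x : F.obj A // θ.app A x = y} := by
  intro A y
  let h : A → PUnit := fun _ => PUnit.unit
  have key : ∀ x : F.obj A, θ.app PUnit (F.map (TypeCat.ofHom h) x) = G.map (TypeCat.ofHom h) (θ.app A x) :=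
    fun x => (NatTrans.naturality_apply θ (TypeCat.ofHom h) x)
  let f : {x : F.obj A // θ.app A x = y} →
      {x : F.obj PUnit // θ.app PUnit x = G.map (TypeCat.ofHom h) y} :=
    fun x => ⟨F.map (TypeCat.ofHom h) x.1, by rw [key x.1, x.2]⟩
  have hinj : Function.Injective f := by
    intro a b hab
    have := (hcart h).injective (a₁ := a.1) (a₂ := b.1) ?_
    · exact Subtype.ext this
    · apply Subtype.ext
      simp only []
      have h1 : θ.app A a.1 = θ.app A b.1 := by rw [a.2, b.2]
      have h2 : F.map (TypeCat.ofHom h) a.1 = F.map (TypeCat.ofHom h) b.1 := congrArg Subtype.val hab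
      exact Prod.ext h1 h2
  exact Finite.of_injective f hinj
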